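/- Let X be a metric space, let α ≥ 0 and C > 0. Assume that for every x ∈ X and all radii 0 < r < R, the ball B(x,R) can be covered by at most C(R/r)^α balls of radius r with centers in X. Then the Nagata dimension of X is at most ⌊α⌋: there exists a constant c ∈ (0,1) such that for every s > 0 the space X admits a cover 𝒰 = ⋃_{k=0}^{⌊α⌋} 𝒰_k in which every member has diameter at most s and each family 𝒰_k is cs-separated. In particular, the Nagata dimension of a metric space is at most its Assouad dimension. -/

import Mathlib

open Metric Set

/-- The set `A` in a space with distance function `d` has Nagata dimension at most `n`
with constant `c` at scale `s` (written `dim_N(A,c,s) ≤ n` in the paper): there is a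
cover `𝒰 = ⋃_{k=0}^n 𝒰 k` of `A` by subsets of `A`, each member having diameter at
most `s`, such that each family `𝒰 k` is `c*s`-separated. -/
def dimNle {X : Type*} (d : X → X → ℝ) (A : Set X) (c s : ℝ) (n : ℕ) : Prop :=
  ∃ 𝒰 : Fin (n + 1) → Set (Set X),
    (∀ k, ∀ U ∈ 𝒰 k, U ⊆ A) ∧
    (∀ p ∈ A, ∃ k, ∃ U ∈ 𝒰 k, p ∈ U) ∧
    (∀ k, ∀ U ∈ 𝒰 k, ∀ a ∈ U, ∀ b ∈ U, d a b ≤ s) ∧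
    (∀ k, ∀ U ∈ 𝒰 k, ∀ V ∈ 𝒰 k, U ≠ V → ∀ a ∈ U, ∀ b ∈ V, c * s ≤ d a b)

/-- `dimAle d A C Rbar β` (written `dim_A(A,C,Rbar) ≤ β` in the paper): for all
`0 < r < R < Rbar` and every `x ∈ A`, the ball of radius `R` around `x` in `A` can be
covered by at most `C * (R/r)^β` balls of radius `r` with centers in `A`. -/
def dimAle {X : Type*} (d : X → X → ℝ) (A : Set X) (C Rbar β : ℝ) : Prop :=
  ∀ r R : ℝ, 0 < r → r < R → R < Rbar → ∀ x ∈ A,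
    ∃ T : Finset X, ↑T ⊆ A ∧ (T.card : ℝ) ≤ C * (R / r) ^ β ∧
      ∀ z ∈ A, d z x < R → ∃ t ∈ T, d z t < r

/-- `d` is a metric distance function on `Y`: symmetric, triangle inequality, and
vanishing exactly on the diagonal. -/
def IsMetricDist {Y : Type*} (d : Y → Y → ℝ) : Prop :=
  (∀ a b, d a b = d b a) ∧ (∀ a b c, d a c ≤ d a b + d b c) ∧ (∀ a b, d a b = 0 ↔ a = b)

/-- An `ε`-coupling between the pointed spaces `(A, dA, a₀)` and `(B, dB, b₀)`:
a pseudometric on the disjoint union extending `dA` and `dB`, with `d(a₀,b₀) ≤ ε`,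
every point of `B_A(a₀,1/ε)` within distance `< ε` of a point of `B`, and every point
of `B_B(b₀,1/ε)` within distance `< ε` of a point of `A`. -/
def IsCoupling {A B : Type*} (dA : A → A → ℝ) (dB : B → B → ℝ) (a₀ : A) (b₀ : B)
    (ε : ℝ) (d : A ⊕ B → A ⊕ B → ℝ) : Prop :=
  (∀ p q, d p q = d q p) ∧
  (∀ p, d p p = 0) ∧
  (∀ p q r, d p r ≤ d p q + d q r) ∧
  (∀ u v : A, d (Sum.inl u) (Sum.inl v) = dA u v) ∧
  (∀ u v : B, d (Sum.inr u) (Sum.inr v) = dB u v) ∧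
  d (Sum.inl a₀) (Sum.inr b₀) ≤ ε ∧
  (∀ u : A, dA u a₀ < 1 / ε → ∃ v : B, d (Sum.inl u) (Sum.inr v) < ε) ∧
  (∀ v : B, dB v b₀ < 1 / ε → ∃ u : A, d (Sum.inl u) (Sum.inr v) < ε)


/-- The set of net points of `Y` near `x` that are `c*s`-close to `S`. -/
def nagataRel {X : Type*} [MetricSpace X] (Y S : Set X) (c s : ℝ) (x : X) : Set X :=
  {y | y ∈ Y ∧ dist y x < 2*s ∧ ∃ p ∈ S, dist y p ≤ c*s}
/-- Every subset of a metric space has a maximal `t`-separated subset, which is then a `t`-net. -/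
lemma nagata_maxsep {X : Type*} [MetricSpace X] (S : Set X) (t : ℝ) (ht : 0 < t) :
    ∃ Z : Set X, Z ⊆ S ∧ (∀ a ∈ Z, ∀ b ∈ Z, a ≠ b → t ≤ dist a b) ∧
      ∀ p ∈ S, ∃ z ∈ Z, dist p z < t := by
  have hchainU : ∀ c ⊆ {T : Set X | T ⊆ S ∧ ∀ a ∈ T, ∀ b ∈ T, a ≠ b → t ≤ dist a b},
      IsChain (fun x1 x2 => x1 ⊆ x2) c → ∃ ub ∈ {T : Set X | T ⊆ S ∧ ∀ a ∈ T, ∀ b ∈ T, a ≠ b → t ≤ dist a b}, ∀ s ∈ c, s ⊆ ub := by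
    intro c hcS hchain
    refine ⟨⋃₀ c, ⟨?_, ?_⟩, fun T hT => subset_sUnion_of_mem hT⟩
    · exact sUnion_subset fun T hT => (hcS hT).1
    · intro a ha b hb hab
      obtain ⟨T1, hT1, ha1⟩ := ha
      obtain ⟨T2, hT2, hb2⟩ := hb
      rcases eq_or_ne T1 T2 with rfl | hne
      · exact (hcS hT1).2 a ha1 b hb2 hab
      · rcases hchain hT1 hT2 hne with h | h
        · exact (hcS hT2).2 a (h ha1) b hb2 hab
        · exact (hcS hT1).2 a ha1 b (h hb2) hab
  obtain ⟨Z, hZ⟩ := zorn_subset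
      {T : Set X | T ⊆ S ∧ ∀ a ∈ T, ∀ b ∈ T, a ≠ b → t ≤ dist a b} hchainU
  · obtain ⟨⟨hZS, hZsep⟩, hmax⟩ := hZ
    refine ⟨Z, hZS, hZsep, ?_⟩
    intro p hp
    by_contra hcon
    push_neg at hcon
    have hpZ : p ∉ Z := by
      intro hpZ
      have := hcon p hpZ
      simp at this
      linarith
    have hins : insert p Z ∈ {T : Set X | T ⊆ S ∧ ∀ a ∈ T, ∀ b ∈ T, a ≠ b → t ≤ dist a b} := by
      refine ⟨insert_subset hp hZS, ?_⟩
      intro a ha b hb hab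
      rcases ha with rfl | ha
      · rcases hb with rfl | hb
        · exact absurd rfl hab
        · exact hcon b hb
      · rcases hb with rfl | hb
        · rw [dist_comm]; exact hcon a ha
        · exact hZsep a ha b hb hab
    have := hmax hins (subset_insert p Z)
    exact hpZ (this (mem_insert p Z))

/-- Packing bound: a `t`-separated subset of a ball of radius `R` is finite with at most
`C * (2R/t)^α` elements. -/
lemma nagata_pack {X : Type*} [MetricSpace X] {α C : ℝ}
    (hcov : ∀ (x : X) (r R : ℝ), 0 < r → r < R →
      ∃ T : Finset X, (T.card : ℝ) ≤ C * (R / r) ^ α ∧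
        ∀ z : X, dist z x < R → ∃ t ∈ T, dist z t < r)
    (x : X) (t R : ℝ) (ht : 0 < t) (htR : t ≤ R) (P : Set X)
    (hPb : ∀ p ∈ P, dist p x < R) (hPsep : ∀ a ∈ P, ∀ b ∈ P, a ≠ b → t ≤ dist a b) :
    P.Finite ∧ ((P.ncard : ℝ) ≤ C * (2*R/t) ^ α) := by
  obtain ⟨T, hTc, hTcov⟩ := hcov x (t/2) R (by linarith) (by linarith)
  have hsel : ∀ p : X, ∃ u : X, p ∈ P → u ∈ T ∧ dist p u < t/2 := by
    intro p
    by_cases hp : p ∈ P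
    · obtain ⟨u, hu, hd⟩ := hTcov p (hPb p hp)
      exact ⟨u, fun _ => ⟨hu, hd⟩⟩
    · exact ⟨x, fun h => absurd h hp⟩
  choose f hf using hsel
  have hinj : InjOn f P := by
    intro a ha b hb hab
    by_contra hne
    have h1 := hf a ha
    have h2 := hf b hb
    have h3 := hPsep a ha b hb hne
    have h4 := dist_triangle a (f b) b
    have h6 : dist a (f b) < t/2 := hab ▸ h1.2
    have h5 : dist (f b) b = dist b (f b) := dist_comm _ _
    linarith [h2.2]
  have hmap : ∀ p ∈ P, f p ∈ (T : Set X) := fun p hp => (hf p hp).1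
  have hfin : P.Finite := by
    refine Set.Finite.of_finite_image ?_ hinj
    exact T.finite_toSet.subset (image_subset_iff.mpr hmap)
  have hcard : P.ncard ≤ T.card := by
    have := Set.ncard_le_ncard_of_injOn f hmap hinj T.finite_toSet
    simpa [Set.ncard_coe_finset] using this
  refine ⟨hfin, ?_⟩
  have hbase : R / (t/2) = 2*R/t := by
    field_simp
  calc (P.ncard : ℝ) ≤ (T.card : ℝ) := by exact_mod_cast hcard
    _ ≤ C * (R/(t/2)) ^ α := hTc
    _ = C * (2*R/t) ^ α := by rw [hbase]

set_option maxHeartbeats 2000000 in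
/-- One carving stage: given a residual set `S` whose nearby net points number at most `B`
locally, produce an `s`-bounded, `c*s`-separated family inside `S` whose complement has
local net count at most `C*24^α*(128*c)*B`. -/
lemma nagata_step {X : Type*} [MetricSpace X] {α C : ℝ} (hC : 0 < C)
    (hcov : ∀ (x : X) (r R : ℝ), 0 < r → r < R →
      ∃ T : Finset X, (T.card : ℝ) ≤ C * (R / r) ^ α ∧
        ∀ z : X, dist z x < R → ∃ t ∈ T, dist z t < r)
    (c s : ℝ) (hc0 : 0 < c) (hc1 : c ≤ 1/128) (hs : 0 < s)
    (Y : Set X) (hYsep : ∀ a ∈ Y, ∀ b ∈ Y, a ≠ b → c*s ≤ dist a b)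
    (S : Set X) (B : ℝ) (hB0 : 0 ≤ B)
    (hinv : ∀ x : X, ((nagataRel Y S c s x).ncard : ℝ) ≤ B) :
    ∃ 𝒰 : Set (Set X),
      (∀ U ∈ 𝒰, U ⊆ S) ∧
      (∀ U ∈ 𝒰, ∀ a ∈ U, ∀ b ∈ U, dist a b ≤ s) ∧
      (∀ U ∈ 𝒰, ∀ V ∈ 𝒰, U ≠ V → ∀ a ∈ U, ∀ b ∈ V, c*s ≤ dist a b) ∧
      (∀ x : X, ((nagataRel Y (S \ ⋃₀ 𝒰) c s x).ncard : ℝ) ≤ C*(24:ℝ)^α * (128*c) * B) := by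
  classical
  obtain ⟨Z, hZS, hZsep, hZcov⟩ := nagata_maxsep S (s/4) (by linarith)
  -- finiteness of local net-point sets
  have hrelfin : ∀ z : X, (nagataRel Y S c s z).Finite := by
    intro z
    refine (nagata_pack hcov z (c*s) (2*s) (by positivity) (by nlinarith) _
      (fun p hp => hp.2.1) (fun a ha b hb hab => hYsep a ha.1 b hb.1 hab)).1
  -- window count
  set m : ℕ := ⌊1/(64*c)⌋₊ with hm
  have hmub : (m:ℝ) ≤ 1/(64*c) := Nat.floor_le (by positivity)
  have hmlb : 1/(64*c) - 1 < (m:ℝ) := Nat.sub_one_lt_floor _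
  have h128 : 128*c*(1/(64*c)) = 2 := by field_simp; ring
  have hm1 : (1:ℝ) ≤ 128*c*(m:ℝ) := by nlinarith
  have hm0 : 0 < m := by
    rcases Nat.eq_zero_or_pos m with h | h
    · rw [h] at hm1; norm_num at hm1
    · exact h
  have hmR : (0:ℝ) < (m:ℝ) := by exact_mod_cast hm0
  -- candidate radii
  set A : ℕ → ℝ := fun k => s/4 + 8*(k:ℝ)*c*s with hA
  set Wfin : X → ℕ → Finset X := fun z k =>
    (hrelfin z).toFinset.filter (fun y => A k - c*s < dist y z ∧ dist y z < A k + 3*(c*s)) with hW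
  -- choose a window with low count
  have hwin : ∀ z ∈ Z, ∃ k : ℕ, k < m ∧ ((Wfin z k).card : ℝ) ≤ B/(m:ℝ) := by
    intro z hz
    by_contra hcon
    push_neg at hcon
    have hdisj : ∀ k1 ∈ Finset.range m, ∀ k2 ∈ Finset.range m, k1 ≠ k2 →
        Disjoint (Wfin z k1) (Wfin z k2) := by
      intro k1 _ k2 _ hne
      refine Finset.disjoint_left.mpr (fun y h1 h2 => ?_)
      rw [hW, Finset.mem_filter] at h1 h2
      have e1 := h1.2
      have e2 := h2.2
      rcases lt_or_gt_of_ne hne with h | h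
      · have hk : (k1:ℝ) + 1 ≤ (k2:ℝ) := by exact_mod_cast Nat.succ_le_of_lt h
        rw [hA] at e1 e2
        simp only at e1 e2
        nlinarith [e1.2, e2.1]
      · have hk : (k2:ℝ) + 1 ≤ (k1:ℝ) := by exact_mod_cast Nat.succ_le_of_lt h
        rw [hA] at e1 e2
        simp only at e1 e2
        nlinarith [e2.2, e1.1]
    have hsub : (Finset.range m).biUnion (Wfin z) ⊆ (hrelfin z).toFinset :=
      Finset.biUnion_subset.mpr fun k _ => Finset.filter_subset _ _
    have hcards : ∑ k ∈ Finset.range m, (Wfin z k).card ≤ (hrelfin z).toFinset.card := by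
      rw [← Finset.card_biUnion hdisj]
      exact Finset.card_le_card hsub
    have hFB : (((hrelfin z).toFinset.card : ℕ) : ℝ) ≤ B := by
      rw [← Set.ncard_eq_toFinset_card _ (hrelfin z)]
      exact hinv z
    have hlt : B < ∑ k ∈ Finset.range m, ((Wfin z k).card : ℝ) := by
      have hsumconst : ∑ _k ∈ Finset.range m, (B/(m:ℝ)) = B := by
        rw [Finset.sum_const, Finset.card_range, nsmul_eq_mul]
        field_simp
      calc B = ∑ _k ∈ Finset.range m, (B/(m:ℝ)) := hsumconst.symm
        _ < ∑ k ∈ Finset.range m, ((Wfin z k).card : ℝ) := by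
            refine Finset.sum_lt_sum_of_nonempty ?_ ?_
            · exact Finset.nonempty_range_iff.mpr hm0.ne'
            · intro k hk
              exact hcon k (Finset.mem_range.mp hk)
    have hle : ∑ k ∈ Finset.range m, ((Wfin z k).card : ℝ) ≤ B := by
      calc ∑ k ∈ Finset.range m, ((Wfin z k).card : ℝ)
          = ((∑ k ∈ Finset.range m, (Wfin z k).card : ℕ) : ℝ) := by push_cast; ring
        _ ≤ (((hrelfin z).toFinset.card : ℕ) : ℝ) := by exact_mod_cast hcards
        _ ≤ B := hFB
    linarith
  -- radius choice
  obtain ⟨k0, hk0spec⟩ : ∃ k0 : X → ℕ,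
      ∀ z ∈ Z, k0 z < m ∧ ((Wfin z (k0 z)).card : ℝ) ≤ B/(m:ℝ) := by
    choose f hf1 hf2 using hwin
    refine ⟨fun z => if hz : z ∈ Z then f z hz else 0, fun z hz => ?_⟩
    simp only [dif_pos hz]
    exact ⟨hf1 z hz, hf2 z hz⟩
  obtain ⟨ρ, hρeq⟩ : ∃ ρ : X → ℝ, ∀ z, ρ z = A (k0 z) :=
    ⟨fun z => A (k0 z), fun _ => rfl⟩
  have hρlb : ∀ z : X, s/4 ≤ ρ z := by
    intro z
    have hk : (0:ℝ) ≤ ((k0 z : ℕ) : ℝ) := Nat.cast_nonneg _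
    rw [hρeq, hA]
    simp only
    nlinarith [hk, mul_pos hc0 hs]
  have hcm : 64*c*(m:ℝ) ≤ 1 := by
    have h64 : 64*c*(1/(64*c)) = 1 := by field_simp
    nlinarith [mul_le_mul_of_nonneg_left hmub (by positivity : (0:ℝ) ≤ 64*c)]
  have hρub : ∀ z ∈ Z, ρ z ≤ 3*s/8 := by
    intro z hz
    have h1 : (k0 z : ℝ) + 1 ≤ (m:ℝ) := by exact_mod_cast Nat.succ_le_of_lt (hk0spec z hz).1
    have hcs : 0 < c*s := by positivity
    have e1 : ((k0 z : ℝ))*(c*s) ≤ ((m:ℝ)-1)*(c*s) := by nlinarith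
    have e2 : (m:ℝ)*(c*s) ≤ s/64 := by nlinarith
    rw [hρeq, hA]
    simp only
    nlinarith [e1, e2, hcs]
  -- well-order
  have wf : WellFounded (@WellOrderingRel X) := IsWellFounded.wf
  set U : X → Set X := fun z =>
    {p | p ∈ S ∧ dist p z ≤ ρ z ∧ ∀ w ∈ Z, WellOrderingRel w z → ρ w + 2*(c*s) ≤ dist p w}
    with hU
  refine ⟨U '' Z, ?_, ?_, ?_, ?_⟩
  · rintro V ⟨z, hz, rfl⟩ p hp
    exact hp.1
  · rintro V ⟨z, hz, rfl⟩ a ha b hb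
    have h1 : dist a z ≤ ρ z := ha.2.1
    have h2 : dist b z ≤ ρ z := hb.2.1
    have h3 := hρub z hz
    have h4 := dist_triangle a z b
    rw [dist_comm z b] at h4
    calc dist a b ≤ dist a z + dist b z := h4
      _ ≤ ρ z + ρ z := add_le_add h1 h2
      _ ≤ 3*s/8 + 3*s/8 := add_le_add h3 h3
      _ ≤ s := by linarith
  · rintro V ⟨z, hz, rfl⟩ V' ⟨w, hw, rfl⟩ hne a ha b hb
    have hzw : z ≠ w := by
      rintro rfl
      exact hne rfl
    have hcs : 0 ≤ c*s := by positivity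
    rcases trichotomous_of WellOrderingRel z w with h | h | h
    · -- z earlier: b's condition at z
      have h1 : ρ z + 2*(c*s) ≤ dist b z := hb.2.2 z hz h
      have h2 : dist a z ≤ ρ z := ha.2.1
      have h3 := dist_triangle b a z
      rw [dist_comm b a] at h3
      linarith
    · exact absurd h hzw
    · have h1 : ρ w + 2*(c*s) ≤ dist a w := ha.2.2 w hw h
      have h2 : dist b w ≤ ρ w := hb.2.1
      have h3 := dist_triangle a b w
      linarith
  · -- residual count
    intro x
    -- the set of nearby Z-centers
    have hZB := nagata_pack hcov x (s/4) (3*s) (by linarith) (by linarith)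
      {z | z ∈ Z ∧ dist z x < 3*s} (fun p hp => hp.2)
      (fun a ha b hb hab => hZsep a ha.1 b hb.1 hab)
    obtain ⟨hZBfin, hZBcard⟩ := hZB
    have hZBcard' : ((hZBfin.toFinset.card : ℕ) : ℝ) ≤ C*(24:ℝ)^α := by
      rw [← Set.ncard_eq_toFinset_card _ hZBfin]
      have hb : 2*(3*s)/(s/4) = 24 := by field_simp; ring
      calc (({z | z ∈ Z ∧ dist z x < 3*s}).ncard : ℝ) ≤ C * (2*(3*s)/(s/4))^α := hZBcard
        _ = C * (24:ℝ)^α := by rw [hb]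
    set G : Finset X := hZBfin.toFinset.biUnion (fun z => Wfin z (k0 z)) with hG
    have hsub : nagataRel Y (S \ ⋃₀ (U '' Z)) c s x ⊆ (G : Set X) := by
      intro y hy
      obtain ⟨hyY, hyx, p, hpmem, hyp⟩ := hy
      obtain ⟨hpS, hpU⟩ := hpmem
      have hQne : {z | z ∈ Z ∧ dist p z < ρ z + 2*(c*s)}.Nonempty := by
        obtain ⟨z₀, hz₀, hd⟩ := hZcov p hpS
        refine ⟨z₀, hz₀, lt_of_lt_of_le hd ?_⟩
        have := hρlb z₀
        nlinarith
      set zs := wf.min _ hQne with hzs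
      have hzsQ : zs ∈ {z | z ∈ Z ∧ dist p z < ρ z + 2*(c*s)} := wf.min_mem _ hQne
      have hzsZ : zs ∈ Z := hzsQ.1
      have hshell : ρ zs < dist p zs := by
        by_contra hle
        push_neg at hle
        apply hpU
        refine ⟨U zs, ⟨zs, hzsZ, rfl⟩, hpS, hle, ?_⟩
        intro w hw hrw
        by_contra hlt
        push_neg at hlt
        exact wf.not_lt_min {z | z ∈ Z ∧ dist p z < ρ z + 2*(c*s)} (x := w) ⟨hw, hlt⟩ hrw
      clear_value zs
      have hub := hρub zs hzsZ
      have hcs : 0 < c*s := by positivity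
      have hcss : c*s ≤ s/128 := by nlinarith
      -- y belongs to the window Finset of zs
      have hyW : y ∈ Wfin zs (k0 zs) := by
        rw [hW]
        simp only [Finset.mem_filter, Set.Finite.mem_toFinset]
        have hd1 : dist y zs ≤ dist y p + dist p zs := dist_triangle y p zs
        have hd2 : dist p zs ≤ dist p y + dist y zs := dist_triangle p y zs
        rw [dist_comm p y] at hd2
        have hr : ρ zs = A (k0 zs) := hρeq zs
        refine ⟨⟨hyY, ?_, ⟨p, hpS, hyp⟩⟩, ?_, ?_⟩
        · -- dist y zs < 2*s
          have h5 : dist p zs < ρ zs + 2*(c*s) := hzsQ.2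
          linarith
        · rw [← hr]
          have h5 : dist p zs < ρ zs + 2*(c*s) := hzsQ.2
          linarith only [hd2, hyp, hshell, hcs]
        · rw [← hr]
          have h5 : dist p zs < ρ zs + 2*(c*s) := hzsQ.2
          linarith only [hd1, hyp, h5, hcs]
      have hzsB : zs ∈ hZBfin.toFinset := by
        rw [Set.Finite.mem_toFinset]
        refine ⟨hzsZ, ?_⟩
        have hd3 : dist zs x ≤ dist zs p + dist p y + dist y x :=
          dist_triangle4 zs p y x
        rw [dist_comm zs p, dist_comm p y] at hd3
        have h4 : dist p zs < ρ zs + 2*(c*s) := hzsQ.2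
        linarith
      rw [hG]
      simp only [Finset.coe_biUnion, Set.mem_iUnion, Finset.mem_coe]
      exact ⟨zs, hzsB, hyW⟩
    -- now count
    have hGfin : ((G : Set X)).Finite := G.finite_toSet
    have h1 : ((nagataRel Y (S \ ⋃₀ (U '' Z)) c s x).ncard : ℝ) ≤ (G.card : ℝ) := by
      have := Set.ncard_le_ncard hsub hGfin
      rw [Set.ncard_coe_finset] at this
      exact_mod_cast this
    have h2 : (G.card : ℝ) ≤ ∑ z ∈ hZBfin.toFinset, ((Wfin z (k0 z)).card : ℝ) := by
      rw [hG]
      have := Finset.card_biUnion_le (s := hZBfin.toFinset) (t := fun z => Wfin z (k0 z))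
      calc ((hZBfin.toFinset.biUnion fun z => Wfin z (k0 z)).card : ℝ)
          ≤ ((∑ z ∈ hZBfin.toFinset, (Wfin z (k0 z)).card : ℕ) : ℝ) := by exact_mod_cast this
        _ = ∑ z ∈ hZBfin.toFinset, ((Wfin z (k0 z)).card : ℝ) := by push_cast; ring
    have h3 : ∑ z ∈ hZBfin.toFinset, ((Wfin z (k0 z)).card : ℝ)
        ≤ (hZBfin.toFinset.card : ℝ) * (B/(m:ℝ)) := by
      have := Finset.sum_le_card_nsmul hZBfin.toFinset (fun z => ((Wfin z (k0 z)).card : ℝ))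
        (B/(m:ℝ)) ?_
      · rwa [nsmul_eq_mul] at this
      · intro z hz
        rw [Set.Finite.mem_toFinset] at hz
        exact (hk0spec z hz.1).2
    have h4 : (hZBfin.toFinset.card : ℝ) * (B/(m:ℝ)) ≤ (C*(24:ℝ)^α) * (B/(m:ℝ)) := by
      apply mul_le_mul_of_nonneg_right hZBcard'
      positivity
    have h5 : (C*(24:ℝ)^α) * (B/(m:ℝ)) ≤ C*(24:ℝ)^α * (128*c) * B := by
      have hC24 : (0:ℝ) ≤ C*(24:ℝ)^α := by positivity
      have hBp : B/(m:ℝ) ≤ 128*c*B := by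
        rw [div_le_iff₀ hmR]
        nlinarith
      calc (C*(24:ℝ)^α) * (B/(m:ℝ)) ≤ (C*(24:ℝ)^α) * (128*c*B) :=
            mul_le_mul_of_nonneg_left hBp hC24
        _ = C*(24:ℝ)^α * (128*c) * B := by ring
    linarith

set_option maxHeartbeats 2000000 in
theorem nagata_dim_le_assouad_dim' {X : Type*} [MetricSpace X] (α C : ℝ)
    (hα : 0 ≤ α) (hC : 0 < C)
    (hcov : ∀ (x : X) (r R : ℝ), 0 < r → r < R →
      ∃ T : Finset X, (T.card : ℝ) ≤ C * (R / r) ^ α ∧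
        ∀ z : X, dist z x < R → ∃ t ∈ T, dist z t < r) :
    ∃ c : ℝ, 0 < c ∧ c < 1 ∧ ∀ s : ℝ, 0 < s →
      ∃ 𝒰 : Fin (Nat.floor α + 1) → Set (Set X),
        (∀ k, ∀ U ∈ 𝒰 k, U ⊆ (Set.univ : Set X)) ∧
        (∀ p ∈ (Set.univ : Set X), ∃ k, ∃ U ∈ 𝒰 k, p ∈ U) ∧
        (∀ k, ∀ U ∈ 𝒰 k, ∀ a ∈ U, ∀ b ∈ U, dist a b ≤ s) ∧
        (∀ k, ∀ U ∈ 𝒰 k, ∀ V ∈ 𝒰 k, U ≠ V → ∀ a ∈ U, ∀ b ∈ V, c * s ≤ dist a b) := by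
  classical
  set n := Nat.floor α with hn
  have hαlt : α < (n:ℝ) + 1 := by
    have := Nat.lt_floor_add_one α
    exact_mod_cast this
  obtain ⟨K, hK⟩ : ∃ K : ℝ, K = C*(24:ℝ)^α*128 := ⟨_, rfl⟩
  have hKpos : 0 < K := by rw [hK]; positivity
  obtain ⟨D, hD⟩ : ∃ D : ℝ, D = K^(n+1) * (C*(4:ℝ)^α) := ⟨_, rfl⟩
  have hDpos : 0 < D := by rw [hD]; positivity
  obtain ⟨e, he⟩ : ∃ e : ℝ, e = ((n:ℝ)+1) - α := ⟨_, rfl⟩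
  have hepos : 0 < e := by rw [he]; linarith
  obtain ⟨c, hcdef⟩ : ∃ c : ℝ, c = min (1/128) ((2*D)⁻¹ ^ (1/e)) := ⟨_, rfl⟩
  have hc0 : 0 < c := by
    rw [hcdef]
    exact lt_min (by norm_num) (Real.rpow_pos_of_pos (by positivity) _)
  have hc128 : c ≤ 1/128 := by rw [hcdef]; exact min_le_left _ _
  have hc1 : c < 1 := lt_of_le_of_lt hc128 (by norm_num)
  -- key smallness
  have hce : c ^ e ≤ (2*D)⁻¹ := by
    have h₁ : c ≤ (2*D)⁻¹ ^ (1/e) := by rw [hcdef]; exact min_le_right _ _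
    have h₂ : c^e ≤ ((2*D)⁻¹ ^ (1/e))^e := Real.rpow_le_rpow hc0.le h₁ hepos.le
    rwa [← Real.rpow_mul (by positivity), one_div_mul_cancel hepos.ne', Real.rpow_one] at h₂
  have hLHS : (K*c)^(n+1) * (C*(4/c)^α) = D * c ^ e := by
    have h4c : (4/c)^α = (4:ℝ)^α / c^α := Real.div_rpow (by norm_num) hc0.le α
    have hcast : ((n+1:ℕ):ℝ) = (n:ℝ)+1 := by push_cast; ring
    have hcpow : (c:ℝ)^(n+1) = c ^ ((n:ℝ)+1) := by
      rw [← Real.rpow_natCast c (n+1), hcast]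
    have hsub : c ^ ((n:ℝ)+1) / c^α = c ^ (((n:ℝ)+1) - α) := (Real.rpow_sub hc0 _ _).symm
    calc (K*c)^(n+1) * (C*(4/c)^α)
        = (K^(n+1)*c^(n+1)) * (C*((4:ℝ)^α/c^α)) := by rw [mul_pow, h4c]
      _ = (K^(n+1)*(C*(4:ℝ)^α)) * (c^(n+1)/c^α) := by ring
      _ = D * (c ^ ((n:ℝ)+1) / c^α) := by rw [← hD, hcpow]
      _ = D * c ^ (((n:ℝ)+1) - α) := by rw [hsub]
      _ = D * c ^ e := by rw [← he]
  have hkey : (K*c)^(n+1) * (C*(4/c)^α) < 1 := by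
    have h2D : D * (2*D)⁻¹ = 1/2 := by field_simp
    calc (K*c)^(n+1) * (C*(4/c)^α) = D * c ^ e := hLHS
      _ ≤ D * (2*D)⁻¹ := mul_le_mul_of_nonneg_left hce hDpos.le
      _ = 1/2 := h2D
      _ < 1 := by norm_num
  refine ⟨c, hc0, hc1, ?_⟩
  intro s hs
  have hcs_small : c*s ≤ s/128 := by nlinarith [mul_le_mul_of_nonneg_right hc128 hs.le]
  have hcs_pos : 0 < c*s := by positivity
  obtain ⟨Y, -, hYsep, hYnet⟩ := nagata_maxsep (Set.univ : Set X) (c*s) hcs_pos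
  obtain ⟨Bd, hBd⟩ : ∃ Bd : ℕ → ℝ, ∀ i, Bd i = (C*(24:ℝ)^α*(128*c))^i * (C*(4/c)^α) :=
    ⟨_, fun _ => rfl⟩
  have hq0 : (0:ℝ) < C*(24:ℝ)^α*(128*c) := by positivity
  have hN0 : (0:ℝ) < C*(4/c)^α := by positivity
  have hBdnn : ∀ i, 0 ≤ Bd i := by
    intro i; rw [hBd]; positivity
  -- the step function
  have hstepex : ∀ (S : Set X) (B : ℝ), ∃ 𝒰 : Set (Set X),
      (0 ≤ B ∧ (∀ x : X, ((nagataRel Y S c s x).ncard : ℝ) ≤ B)) →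
      ((∀ U ∈ 𝒰, U ⊆ S) ∧ (∀ U ∈ 𝒰, ∀ a ∈ U, ∀ b ∈ U, dist a b ≤ s) ∧
       (∀ U ∈ 𝒰, ∀ V ∈ 𝒰, U ≠ V → ∀ a ∈ U, ∀ b ∈ V, c*s ≤ dist a b) ∧
       (∀ x : X, ((nagataRel Y (S \ ⋃₀ 𝒰) c s x).ncard : ℝ) ≤ C*(24:ℝ)^α * (128*c) * B)) := by
    intro S B
    by_cases h : 0 ≤ B ∧ ∀ x : X, ((nagataRel Y S c s x).ncard : ℝ) ≤ B
    · obtain ⟨𝒰, h1, h2, h3, h4⟩ :=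
        nagata_step hC hcov c s hc0 hc128 hs Y hYsep S B h.1 h.2
      exact ⟨𝒰, fun _ => ⟨h1, h2, h3, h4⟩⟩
    · exact ⟨∅, fun hh => absurd hh h⟩
  choose step hstepspec using hstepex
  obtain ⟨F, hF0, hFs⟩ : ∃ F : ℕ → Set X, F 0 = Set.univ ∧
      ∀ i, F (i+1) = F i \ ⋃₀ step (F i) (Bd i) :=
    ⟨fun i => Nat.rec Set.univ (fun j Rj => Rj \ ⋃₀ step Rj (Bd j)) i, rfl, fun i => rfl⟩
  -- the basic counting bound at scale 2*s
  have hbase : ∀ (S : Set X) (x : X), (nagataRel Y S c s x).Finite ∧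
      ((nagataRel Y S c s x).ncard : ℝ) ≤ C*(4/c)^α := by
    intro S x
    have hp := nagata_pack hcov x (c*s) (2*s) hcs_pos (by linarith) (nagataRel Y S c s x)
      (fun p hp => hp.2.1) (fun a ha b hb hab => hYsep a ha.1 b hb.1 hab)
    refine ⟨hp.1, ?_⟩
    have hb : 2*(2*s)/(c*s) = 4/c := by
      field_simp
      ring
    calc ((nagataRel Y S c s x).ncard : ℝ) ≤ C * (2*(2*s)/(c*s))^α := hp.2
      _ = C * (4/c)^α := by rw [hb]
  -- invariant
  have hInv : ∀ i, ∀ x : X, ((nagataRel Y (F i) c s x).ncard : ℝ) ≤ Bd i := by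
    intro i
    induction i with
    | zero =>
      intro x
      have h0 : Bd 0 = C*(4/c)^α := by rw [hBd, pow_zero, one_mul]
      rw [h0]
      exact (hbase (F 0) x).2
    | succ i ih =>
      have hsp := hstepspec (F i) (Bd i) ⟨hBdnn i, ih⟩
      intro x
      have hBdsucc : C*(24:ℝ)^α*(128*c) * Bd i = Bd (i+1) := by
        rw [hBd, hBd, pow_succ]; ring
      rw [hFs i, ← hBdsucc]
      exact hsp.2.2.2 x
  -- final bound is < 1
  have hkey' : Bd (n+1) < 1 := by
    have hb2 : C*(24:ℝ)^α*(128*c) = K*c := by rw [hK]; ring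
    rw [hBd, hb2]
    exact hkey
  -- emptiness of the last residual
  have hempty : F (n+1) = ∅ := by
    by_contra hne
    obtain ⟨x, hx⟩ := Set.nonempty_iff_ne_empty.mpr hne
    obtain ⟨y, hyY, hyd⟩ := hYnet x (Set.mem_univ x)
    have hyx : dist y x < 2*s := by
      rw [dist_comm]
      linarith
    have hyrel : y ∈ nagataRel Y (F (n+1)) c s x :=
      ⟨hyY, hyx, ⟨x, hx, by rw [dist_comm]; linarith⟩⟩
    have hfin := (hbase (F (n+1)) x).1
    have h1 : 0 < (nagataRel Y (F (n+1)) c s x).ncard := (Set.ncard_pos hfin).mpr ⟨y, hyrel⟩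
    have h2 : (1:ℝ) ≤ ((nagataRel Y (F (n+1)) c s x).ncard : ℝ) := by exact_mod_cast h1
    have h3 := hInv (n+1) x
    linarith
  -- descent: every point is captured at some level
  have hdesc : ∀ i, ∀ p : X, p ∉ F i → ∃ j, j < i ∧ ∃ U ∈ step (F j) (Bd j), p ∈ U := by
    intro i
    induction i with
    | zero =>
      intro p hp
      exact absurd (by rw [hF0]; exact Set.mem_univ p) hp
    | succ i ih =>
      intro p hp
      by_cases hpi : p ∈ F i
      · have hp2 : p ∉ F i \ ⋃₀ step (F i) (Bd i) := by rw [← hFs i]; exact hp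
        have hp3 : p ∈ ⋃₀ step (F i) (Bd i) := by
          by_contra hcon
          exact hp2 ⟨hpi, hcon⟩
        obtain ⟨U, hU, hpU⟩ := hp3
        exact ⟨i, Nat.lt_succ_self i, U, hU, hpU⟩
      · obtain ⟨j, hj, h⟩ := ih p hpi
        exact ⟨j, hj.trans (Nat.lt_succ_self i), h⟩
  -- assemble the families
  refine ⟨fun j => step (F (j : ℕ)) (Bd (j : ℕ)), ?_, ?_, ?_, ?_⟩
  · intro k U _
    exact Set.subset_univ U
  · intro p _
    have hnp : p ∉ F (n+1) := by rw [hempty]; exact Set.notMem_empty p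
    obtain ⟨j, hj, U, hU, hpU⟩ := hdesc (n+1) p hnp
    exact ⟨⟨j, hj⟩, U, hU, hpU⟩
  · intro k U hU a ha b hb
    exact (hstepspec (F (k:ℕ)) (Bd (k:ℕ)) ⟨hBdnn _, hInv _⟩).2.1 U hU a ha b hb
  · intro k U hU V hV hUV a ha b hb
    exact (hstepspec (F (k:ℕ)) (Bd (k:ℕ)) ⟨hBdnn _, hInv _⟩).2.2.1 U hU V hV hUV a ha b hb

/-- If every ball `B(x,R)` in `X` can be covered by at most `C(R/r)^α` balls
of radius `r` (for all `0 < r < R`), then the Nagata dimension of `X` is at most `⌊α⌋`: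
there is `c ∈ (0,1)` such that for every `s > 0` the space admits an `s`-bounded cover
`⋃_{k=0}^{⌊α⌋} 𝒰_k` with each `𝒰_k` being `cs`-separated. In particular, Nagata
dimension is at most Assouad dimension. -/
theorem nagata_dim_le_assouad_dim {X : Type*} [MetricSpace X] (α C : ℝ)
    (hα : 0 ≤ α) (hC : 0 < C)
    (hcov : ∀ (x : X) (r R : ℝ), 0 < r → r < R →
      ∃ T : Finset X, (T.card : ℝ) ≤ C * (R / r) ^ α ∧
        ∀ z : X, dist z x < R → ∃ t ∈ T, dist z t < r) :
    ∃ c : ℝ, 0 < c ∧ c < 1 ∧ ∀ s : ℝ, 0 < s →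
      dimNle (fun a b : X => dist a b) Set.univ c s (Nat.floor α) := by
  obtain ⟨c, hc0, hc1, h⟩ := nagata_dim_le_assouad_dim' α C hα hC hcov
  refine ⟨c, hc0, hc1, fun s hs => ?_⟩
  obtain ⟨𝒰, h1, h2, h3, h4⟩ := h s hs
  exact ⟨𝒰, h1, h2, h3, h4⟩
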